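/- Let n ≥ 2 and let s_1 ≥ s_2 ≥ ⋯ ≥ s_{n-1} ≥ 1 and r be real numbers with 1 ≤ r ≤ s_1. Then r · ∏_{l=2}^{n-1} s_l ≤ ( (∏_{l=1}^{n-1} s_l)² · r )^{(n-1)/(2n-1)}. -/

import Mathlib

/-- Let `n ≥ 2` and let `s 1 ≥ s 2 ≥ ⋯ ≥ s (n-1) ≥ 1` and `r` be real numbers with
`1 ≤ r ≤ s 1`.  Then `r · ∏_{l=2}^{n-1} s l ≤ ((∏_{l=1}^{n-1} s l)² · r)^{(n-1)/(2n-1)}`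
(for `n = 2` the product `∏_{l=2}^{n-1}` is the empty product `1`; the exponent is a
real number). -/
theorem statement11 (n : ℕ) (hn : 2 ≤ n) (s : ℕ → ℝ) (r : ℝ)
    (hanti : ∀ i ∈ Finset.Icc 1 (n - 1), ∀ j ∈ Finset.Icc 1 (n - 1), i ≤ j → s j ≤ s i)
    (hs : ∀ i ∈ Finset.Icc 1 (n - 1), 1 ≤ s i)
    (hr1 : 1 ≤ r) (hrs : r ≤ s 1) :
    r * (∏ l ∈ Finset.Icc 2 (n - 1), s l) ≤
      ((∏ l ∈ Finset.Icc 1 (n - 1), s l) ^ 2 * r) ^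
        (((n : ℝ) - 1) / (2 * (n : ℝ) - 1)) := by
  obtain ⟨m, rfl⟩ : ∃ m, n = m + 2 := ⟨n - 2, by omega⟩
  have hs1 : 1 ≤ s 1 := hs 1 (Finset.mem_Icc.mpr ⟨le_refl 1, by omega⟩)
  set Q := ∏ l ∈ Finset.Icc 2 (m + 2 - 1), s l with hQdef
  set P := ∏ l ∈ Finset.Icc 1 (m + 2 - 1), s l with hPdef
  have hQ1 : (1:ℝ) ≤ Q := by
    rw [hQdef]
    have := Finset.prod_le_prod (s := Finset.Icc 2 (m + 2 - 1)) (f := fun _ => (1:ℝ))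
      (g := s) (by intros; norm_num) (fun i hi => by
        have h := Finset.mem_Icc.mp hi
        exact hs i (Finset.mem_Icc.mpr ⟨by omega, h.2⟩))
    simpa using this
  have hQle : Q ≤ s 1 ^ m := by
    calc Q ≤ ∏ _l ∈ Finset.Icc 2 (m + 2 - 1), s 1 := by
            apply Finset.prod_le_prod
            · intro i hi
              have h := Finset.mem_Icc.mp hi
              have := hs i (Finset.mem_Icc.mpr ⟨by omega, h.2⟩)
              linarith
            · intro i hi
              have h := Finset.mem_Icc.mp hi
              exact hanti 1 (Finset.mem_Icc.mpr ⟨le_refl 1, by omega⟩) i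
                (Finset.mem_Icc.mpr ⟨by omega, h.2⟩) (by omega)
      _ = s 1 ^ m := by
            rw [Finset.prod_const, Nat.card_Icc, show m + 2 - 1 + 1 - 2 = m from by omega]
  have hPQ : P = s 1 * Q := by
    rw [hPdef, hQdef,
      show Finset.Icc 1 (m + 2 - 1) = Finset.Ico 1 (m + 2) from by
        rw [← Finset.Ico_add_one_right_eq_Icc, show m + 2 - 1 + 1 = m + 2 from by omega],
      show Finset.Icc 2 (m + 2 - 1) = Finset.Ico 2 (m + 2) from by
        rw [← Finset.Ico_add_one_right_eq_Icc, show m + 2 - 1 + 1 = m + 2 from by omega],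
      Finset.prod_eq_prod_Ico_succ_bot (by omega : 1 < m + 2)]
  have hr0 : (0:ℝ) < r := by linarith
  have hs10 : (0:ℝ) < s 1 := by linarith
  have hQ0 : (0:ℝ) < Q := by linarith
  have hkey : r ^ (m + 2) * Q ≤ s 1 ^ (2 * m + 2) := by
    calc r ^ (m + 2) * Q ≤ s 1 ^ (m + 2) * s 1 ^ m := by
          apply mul_le_mul (pow_le_pow_left₀ (by linarith) hrs (m + 2)) hQle (by linarith)
            (by positivity)
      _ = s 1 ^ (2 * m + 2) := by rw [← pow_add]; congr 1; omega
  have key : (r * Q) ^ (2 * m + 3) ≤ (P ^ 2 * r) ^ (m + 1) := by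
    calc (r * Q) ^ (2 * m + 3)
        = (r ^ (m + 2) * Q) * (r ^ (m + 1) * Q ^ (2 * m + 2)) := by ring
      _ ≤ s 1 ^ (2 * m + 2) * (r ^ (m + 1) * Q ^ (2 * m + 2)) :=
          mul_le_mul_of_nonneg_right hkey (by positivity)
      _ = (P ^ 2 * r) ^ (m + 1) := by rw [hPQ]; ring
  have ha0 : (0:ℝ) ≤ r * Q := by positivity
  have hb0 : (0:ℝ) ≤ P ^ 2 * r := by positivity
  have hc : (0:ℝ) < ((2 * m + 3 : ℕ) : ℝ) := by positivity
  have h1 : (r * Q) ^ ((2 * m + 3 : ℕ) : ℝ) ≤ (P ^ 2 * r) ^ ((m + 1 : ℕ) : ℝ) := by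
    rw [Real.rpow_natCast, Real.rpow_natCast]; exact key
  have h2 := Real.rpow_le_rpow (by positivity) h1
    (by positivity : (0:ℝ) ≤ 1 / ((2 * m + 3 : ℕ) : ℝ))
  rw [← Real.rpow_mul ha0, ← Real.rpow_mul hb0, mul_one_div, div_self (ne_of_gt hc),
    Real.rpow_one] at h2
  calc r * Q ≤ (P ^ 2 * r) ^ (((m + 1 : ℕ) : ℝ) / ((2 * m + 3 : ℕ) : ℝ)) := by
        rw [div_eq_mul_one_div]; exact h2
    _ = (P ^ 2 * r) ^ ((((m + 2 : ℕ) : ℝ) - 1) / (2 * ((m + 2 : ℕ) : ℝ) - 1)) := by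
        congr 1; push_cast; ring
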